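/- Under Assumptions A, with p_n^# := Σ_{m ≥ 0} p_n(m), one has p_{n₁}^# · p_{n₂}^# ≤ (1 + B_{n₂} − A_{n₂}) · p_{n₁+n₂}^# for all n₁, n₂ ≥ 1. -/

import Mathlib

open Filter Set

/-- Under Assumptions A, with `p_n^# = Σ_{m ≥ 0} p n m` (a finite sum, since
`p n m = 0` for `m > B n`), one has
`p_{n₁}^# · p_{n₂}^# ≤ (1 + B n₂ − A n₂) · p_{n₁+n₂}^#`. -/
theorem psharp_supermultiplicative
    (p : ℕ → ℕ → ℕ) (A B : ℕ → ℕ) (K C : ℝ)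
    (hK : 0 < K) (hpK : ∀ n, 1 ≤ n → ∀ m, (p n m : ℝ) ≤ K ^ n)
    (hC : 0 < C)
    (hABle : ∀ n, 1 ≤ n → A n ≤ B n)
    (hBC : ∀ n, 1 ≤ n → (B n : ℝ) ≤ C * n)
    (hpos : ∀ n, 1 ≤ n → ∀ m, A n ≤ m → m ≤ B n → 0 < p n m)
    (hzero : ∀ n, 1 ≤ n → ∀ m, (m < A n ∨ B n < m) → p n m = 0)
    (hsuper : ∀ n₁ n₂, 1 ≤ n₁ → 1 ≤ n₂ → ∀ m₁ m₂,
      p n₁ m₁ * p n₂ m₂ ≤ p (n₁ + n₂) (m₁ + m₂)) :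
    ∀ n₁ n₂, 1 ≤ n₁ → 1 ≤ n₂ →
      (∑ m ∈ Finset.range (B n₁ + 1), p n₁ m) *
        (∑ m ∈ Finset.range (B n₂ + 1), p n₂ m) ≤
      (1 + B n₂ - A n₂) * ∑ m ∈ Finset.range (B (n₁ + n₂) + 1), p (n₁ + n₂) m := by
  intro n₁ n₂ hn₁ hn₂
  set N := n₁ + n₂ with hN
  have hnN : 1 ≤ N := le_trans hn₁ (Nat.le_add_right _ _)
  set S := ∑ m ∈ Finset.range (B N + 1), p N m with hS
  -- inner lemma
  have inner : ∀ m₂ : ℕ, ∑ m₁ ∈ Finset.range (B n₁ + 1), p N (m₁ + m₂) ≤ S := by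
    intro m₂
    have h1 : ∑ m₁ ∈ Finset.range (B n₁ + 1), p N (m₁ + m₂)
        = ∑ m₁ ∈ (Finset.range (B n₁ + 1)).filter (fun m₁ => m₁ + m₂ ≤ B N),
            p N (m₁ + m₂) := by
      rw [Finset.sum_filter_of_ne]
      intro x _ hx
      by_contra h
      exact hx (hzero N hnN (x + m₂) (Or.inr (lt_of_not_ge h)))
    have h2 : ∑ m₁ ∈ (Finset.range (B n₁ + 1)).filter (fun m₁ => m₁ + m₂ ≤ B N),
          p N (m₁ + m₂)
        = ∑ m ∈ ((Finset.range (B n₁ + 1)).filter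
            (fun m₁ => m₁ + m₂ ≤ B N)).image (· + m₂), p N m := by
      rw [Finset.sum_image]
      intro a _ b _ hab
      beta_reduce at hab
      omega
    rw [h1, h2]
    apply Finset.sum_le_sum_of_subset
    intro x hx
    simp only [Finset.mem_image, Finset.mem_filter, Finset.mem_range] at hx ⊢
    omega
  have hsub : Finset.Icc (A n₂) (B n₂) ⊆ Finset.range (B n₂ + 1) := by
    intro x hx
    simp only [Finset.mem_Icc] at hx
    simp only [Finset.mem_range]
    omega
  calc (∑ m ∈ Finset.range (B n₁ + 1), p n₁ m) *
        (∑ m ∈ Finset.range (B n₂ + 1), p n₂ m)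
      = ∑ m₂ ∈ Finset.range (B n₂ + 1), ∑ m₁ ∈ Finset.range (B n₁ + 1),
          p n₁ m₁ * p n₂ m₂ := by
        rw [Finset.sum_comm, ← Finset.sum_mul_sum]
    _ = ∑ m₂ ∈ Finset.Icc (A n₂) (B n₂), ∑ m₁ ∈ Finset.range (B n₁ + 1),
          p n₁ m₁ * p n₂ m₂ := by
        refine (Finset.sum_subset hsub ?_).symm
        intro x _ hx
        simp only [Finset.mem_Icc, not_and_or, not_le] at hx
        have : p n₂ x = 0 := by
          apply hzero n₂ hn₂ x
          omega
        simp [this]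
    _ ≤ ∑ m₂ ∈ Finset.Icc (A n₂) (B n₂), ∑ m₁ ∈ Finset.range (B n₁ + 1),
          p N (m₁ + m₂) := by
        apply Finset.sum_le_sum
        intro m₂ _
        exact Finset.sum_le_sum fun m₁ _ => hsuper n₁ n₂ hn₁ hn₂ m₁ m₂
    _ ≤ ∑ m₂ ∈ Finset.Icc (A n₂) (B n₂), S :=
        Finset.sum_le_sum fun m₂ _ => inner m₂
    _ = (1 + B n₂ - A n₂) * S := by
        rw [Finset.sum_const, Nat.card_Icc, smul_eq_mul]
        congr 1
        omega
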